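/- (Acerbi's integral formula) Let X be a random variable with values in [0,1] with CDF F and quantile function F†, and let τ ∈ (0,1]. Then CVaR_τ(X) = sup_{b ∈ [0,1]} (b − τ⁻¹ E[(b − X)⁺]) = τ⁻¹ ∫₀^τ F†(y) dy. -/

import Mathlib

open MeasureTheory

/-- Acerbi's integral formula: for `X` with values in `[0,1]`, CDF `F` and quantile
function `F†`, and `τ ∈ (0,1]`,
`CVaR_τ(X) = sup_{b ∈ [0,1]} (b − τ⁻¹ E[(b − X)⁺]) = τ⁻¹ ∫₀^τ F†(y) dy`. -/
theorem acerbi_integral_formula {Ω : Type*} [MeasurableSpace Ω]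
    (μ : Measure Ω) [IsProbabilityMeasure μ]
    (X : Ω → ℝ) (hXmeas : Measurable X) (hX01 : ∀ ω, X ω ∈ Set.Icc (0:ℝ) 1)
    (F : ℝ → ℝ) (hF : ∀ x, F x = (μ {ω | X ω ≤ x}).toReal)
    (Fdag : ℝ → ℝ) (hFdag : ∀ t, Fdag t = sInf {x ∈ Set.Icc (0:ℝ) 1 | t ≤ F x})
    (τ : ℝ) (hτ : τ ∈ Set.Ioc (0:ℝ) 1) :
    sSup ((fun b => b - τ⁻¹ * ∫ ω, max (b - X ω) 0 ∂μ) '' Set.Icc (0:ℝ) 1)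
      = τ⁻¹ * ∫ y in (0:ℝ)..τ, Fdag y := by
  obtain ⟨hτ0, hτ1⟩ := hτ
  -- basic facts about F
  have hFmono : Monotone F := by
    intro a b hab
    rw [hF a, hF b]
    exact ENNReal.toReal_mono (measure_ne_top μ _)
      (measure_mono fun ω h => le_trans h hab)
  have hF0 : ∀ x, 0 ≤ F x := fun x => by rw [hF]; exact ENNReal.toReal_nonneg
  have hFle1 : ∀ x, F x ≤ 1 := fun x => by
    rw [hF]
    exact ENNReal.toReal_le_of_le_ofReal zero_le_one (by simpa using prob_le_one)
  have hF1 : F 1 = 1 := by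
    rw [hF]
    have h : {ω | X ω ≤ 1} = Set.univ := Set.eq_univ_of_forall fun ω => (hX01 ω).2
    rw [h, measure_univ, ENNReal.toReal_one]
  have hFm : Measurable F := hFmono.measurable
  -- facts about Fdag
  have hQne : ∀ y : ℝ, y ≤ 1 → (1:ℝ) ∈ {x ∈ Set.Icc (0:ℝ) 1 | y ≤ F x} := fun y hy =>
    ⟨⟨zero_le_one, le_refl 1⟩, by rw [hF1]; exact hy⟩
  have hQbdd : ∀ y : ℝ, BddBelow {x ∈ Set.Icc (0:ℝ) 1 | y ≤ F x} :=
    fun y => ⟨0, fun x hx => hx.1.1⟩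
  have hFd0 : ∀ y, 0 ≤ Fdag y := fun y => by
    rw [hFdag]; exact Real.sInf_nonneg fun x hx => hx.1.1
  have hFdle1 : ∀ y : ℝ, y ≤ 1 → Fdag y ≤ 1 := fun y hy => by
    rw [hFdag]; exact csInf_le (hQbdd y) (hQne y hy)
  have hB2 : ∀ y x, x ∈ Set.Icc (0:ℝ) 1 → y ≤ F x → Fdag y ≤ x := fun y x hx hyx => by
    rw [hFdag]; exact csInf_le (hQbdd y) ⟨hx, hyx⟩
  have hB1 : ∀ y x, y ≤ 1 → x ∈ Set.Icc (0:ℝ) 1 → F x < y → x ≤ Fdag y := by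
    intro y x hy hx hFx
    rw [hFdag]
    refine le_csInf ⟨1, hQne y hy⟩ fun z hz => ?_
    by_contra h
    push_neg at h
    exact absurd (le_trans hz.2 (hFmono h.le)) (not_le.2 hFx)
  have hFdmono : ∀ y y' : ℝ, y' ≤ 1 → y ≤ y' → Fdag y ≤ Fdag y' := by
    intro y y' h1 hyy
    rw [hFdag, hFdag]
    exact csInf_le_csInf (hQbdd y) ⟨1, hQne y' h1⟩ fun x hx => ⟨hx.1, le_trans hyy hx.2⟩
  -- volume helper
  have hvol : ∀ a b : ℝ, 0 ≤ a → volume (Set.Ioc 0 b ∩ Set.Ici a) = ENNReal.ofReal (b - a) := by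
    intro a b ha
    apply le_antisymm
    · calc volume (Set.Ioc 0 b ∩ Set.Ici a) ≤ volume (Set.Icc a b) :=
            measure_mono fun x hx => ⟨hx.2, hx.1.2⟩
        _ = ENNReal.ofReal (b - a) := Real.volume_Icc
    · rw [← Real.volume_Ioc (a := a) (b := b)]
      exact measure_mono fun x hx => ⟨⟨lt_of_le_of_lt ha hx.1, hx.2⟩, hx.1.le⟩
  -- Lemma A : E[(b-X)⁺] = ∫_{(0,b]} F
  have hA : ∀ b : ℝ, 0 ≤ b → ∫ ω, max (b - X ω) 0 ∂μ = ∫ x in Set.Ioc 0 b, F x := by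
    intro b hb
    have hms : MeasurableSet {p : Ω × ℝ | X p.1 ≤ p.2} :=
      measurableSet_le (hXmeas.comp measurable_fst) measurable_snd
    have hm : Measurable fun p : Ω × ℝ => if X p.1 ≤ p.2 then (1:ℝ) else 0 :=
      Measurable.ite hms measurable_const measurable_const
    have hfint : Integrable
        (Function.uncurry fun (ω : Ω) (x : ℝ) => if X ω ≤ x then (1:ℝ) else 0)
        (μ.prod (volume.restrict (Set.Ioc 0 b))) := by
      refine (integrable_const (1:ℝ)).mono' hm.aestronglyMeasurable ?_
      filter_upwards with p
      by_cases h : X p.1 ≤ p.2 <;> simp [Function.uncurry, h]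
    have hswap := integral_integral_swap hfint
    calc ∫ ω, max (b - X ω) 0 ∂μ
        = ∫ ω, (∫ x in Set.Ioc 0 b, (if X ω ≤ x then (1:ℝ) else 0)) ∂μ := by
          refine integral_congr_ae (Filter.Eventually.of_forall fun ω => ?_)
          show max (b - X ω) 0 = ∫ x in Set.Ioc 0 b, (if X ω ≤ x then (1:ℝ) else 0)
          have heq : (fun x => if X ω ≤ x then (1:ℝ) else 0)
              = Set.indicator (Set.Ici (X ω)) (fun _ => (1:ℝ)) := by
            funext x; simp [Set.indicator_apply, Set.mem_Ici]
          rw [heq, setIntegral_indicator measurableSet_Ici, setIntegral_const, measureReal_def,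
            hvol (X ω) b (hX01 ω).1, smul_eq_mul, mul_one, ENNReal.toReal_ofReal']
      _ = ∫ x in Set.Ioc 0 b, ∫ ω, (if X ω ≤ x then (1:ℝ) else 0) ∂μ := hswap
      _ = ∫ x in Set.Ioc 0 b, F x := by
          refine setIntegral_congr_fun measurableSet_Ioc fun x _ => ?_
          show (∫ ω, (if X ω ≤ x then (1:ℝ) else 0) ∂μ) = F x
          have heq : (fun ω => if X ω ≤ x then (1:ℝ) else 0)
              = Set.indicator {ω | X ω ≤ x} (fun _ => (1:ℝ)) := by
            funext ω; simp [Set.indicator_apply]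
          rw [heq, integral_indicator_const (1:ℝ) (measurableSet_le hXmeas measurable_const),
            smul_eq_mul, mul_one, measureReal_def, hF]
  have hτne : τ ≠ 0 := hτ0.ne'
  -- integrability helper
  have hbddInt : ∀ (g : ℝ → ℝ) (c : ℝ), Measurable g → (∀ x, |g x| ≤ 1) →
      IntegrableOn g (Set.Ioc 0 c) := by
    intro g c hg hgb
    refine Measure.integrableOn_of_bounded (M := 1)
      (by rw [Real.volume_Ioc]; exact ENNReal.ofReal_ne_top) hg.aestronglyMeasurable ?_
    filter_upwards with x using hgb x
  -- section integrals
  have hsec1 : ∀ x : ℝ, (∫ y in Set.Ioc 0 τ, (if F x < y then (1:ℝ) else 0))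
      = max (τ - F x) 0 := by
    intro x
    have heq : (fun y => if F x < y then (1:ℝ) else 0)
        = Set.indicator (Set.Ioi (F x)) (fun _ => (1:ℝ)) := by
      funext y; simp [Set.indicator_apply, Set.mem_Ioi]
    have hset : Set.Ioc 0 τ ∩ Set.Ioi (F x) = Set.Ioc (F x) τ :=
      Set.ext fun y => ⟨fun h => ⟨h.2, h.1.2⟩,
        fun h => ⟨⟨lt_of_le_of_lt (hF0 x) h.1, h.2⟩, h.1⟩⟩
    rw [heq, setIntegral_indicator measurableSet_Ioi, hset, setIntegral_const, smul_eq_mul,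
      mul_one, measureReal_def, Real.volume_Ioc, ENNReal.toReal_ofReal']
  have hmlt : ∀ y : ℝ, MeasurableSet {x : ℝ | F x < y} :=
    fun y => measurableSet_lt hFm measurable_const
  have hsec2 : ∀ (b y : ℝ), (∫ x in Set.Ioc 0 b, (if F x < y then (1:ℝ) else 0))
      = (volume (Set.Ioc 0 b ∩ {x | F x < y})).toReal := by
    intro b y
    have heq : (fun x => if F x < y then (1:ℝ) else 0)
        = Set.indicator {x | F x < y} (fun _ => (1:ℝ)) := by
      funext x; simp [Set.indicator_apply]
    rw [heq, setIntegral_indicator (hmlt y), setIntegral_const, smul_eq_mul, mul_one, measureReal_def]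
  -- Fubini on the plane
  have hfub : ∀ b : ℝ, (∫ x in Set.Ioc 0 b, max (τ - F x) 0)
      = ∫ y in Set.Ioc 0 τ, (volume (Set.Ioc 0 b ∩ {x | F x < y})).toReal := by
    intro b
    have hm2 : Measurable fun p : ℝ × ℝ => if F p.1 < p.2 then (1:ℝ) else 0 :=
      Measurable.ite (measurableSet_lt (hFm.comp measurable_fst) measurable_snd)
        measurable_const measurable_const
    have hfint : Integrable (Function.uncurry fun (x y : ℝ) => if F x < y then (1:ℝ) else 0)
        ((volume.restrict (Set.Ioc 0 b)).prod (volume.restrict (Set.Ioc 0 τ))) := by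
      refine (integrable_const (1:ℝ)).mono' hm2.aestronglyMeasurable ?_
      filter_upwards with p
      by_cases h : F p.1 < p.2 <;> simp [Function.uncurry, h]
    have hswap := integral_integral_swap hfint
    calc (∫ x in Set.Ioc 0 b, max (τ - F x) 0)
        = ∫ x in Set.Ioc 0 b, (∫ y in Set.Ioc 0 τ, (if F x < y then (1:ℝ) else 0)) :=
          setIntegral_congr_fun measurableSet_Ioc fun x _ => (hsec1 x).symm
      _ = ∫ y in Set.Ioc 0 τ, (∫ x in Set.Ioc 0 b, (if F x < y then (1:ℝ) else 0)) := hswap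
      _ = _ := setIntegral_congr_fun measurableSet_Ioc fun y _ => hsec2 b y
  -- V b y ≤ Fdag y
  have hVfin : ∀ b y : ℝ, volume (Set.Ioc 0 b ∩ {x | F x < y}) ≠ ⊤ := by
    intro b y
    refine ne_top_of_le_ne_top ?_ (measure_mono Set.inter_subset_left)
    rw [Real.volume_Ioc]; exact ENNReal.ofReal_ne_top
  have hVle : ∀ b : ℝ, b ≤ 1 → ∀ y ∈ Set.Ioc (0:ℝ) τ,
      (volume (Set.Ioc 0 b ∩ {x | F x < y})).toReal ≤ Fdag y := by
    intro b hb1 y hy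
    have hsub : Set.Ioc 0 b ∩ {x | F x < y} ⊆ Set.Icc 0 (Fdag y) := fun x hx =>
      ⟨hx.1.1.le, hB1 y x (hy.2.trans hτ1) ⟨hx.1.1.le, hx.1.2.trans hb1⟩ hx.2⟩
    calc (volume (Set.Ioc 0 b ∩ {x | F x < y})).toReal
        ≤ (volume (Set.Icc 0 (Fdag y))).toReal :=
          ENNReal.toReal_mono (by rw [Real.volume_Icc]; exact ENNReal.ofReal_ne_top)
            (measure_mono hsub)
      _ = Fdag y := by rw [Real.volume_Icc, sub_zero, ENNReal.toReal_ofReal (hFd0 y)]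
  -- the maximizer
  set bs := Fdag τ with hbs
  have hbsIcc : bs ∈ Set.Icc (0:ℝ) 1 := ⟨hFd0 τ, hFdle1 τ hτ1⟩
  have hVeq : ∀ y ∈ Set.Ioc (0:ℝ) τ,
      (volume (Set.Ioc 0 bs ∩ {x | F x < y})).toReal = Fdag y := by
    intro y hy
    refine le_antisymm (hVle bs hbsIcc.2 y hy) ?_
    have hsub : Set.Ioo 0 (Fdag y) ⊆ Set.Ioc 0 bs ∩ {x | F x < y} := by
      intro x hx
      have hxIcc : x ∈ Set.Icc (0:ℝ) 1 :=
        ⟨hx.1.le, hx.2.le.trans (hFdle1 y (hy.2.trans hτ1))⟩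
      have hFxy : F x < y := by
        by_contra h
        exact absurd (hB2 y x hxIcc (not_lt.1 h)) (not_le.2 hx.2)
      exact ⟨⟨hx.1, hx.2.le.trans (hFdmono y τ hτ1 hy.2)⟩, hFxy⟩
    calc Fdag y = (volume (Set.Ioo 0 (Fdag y))).toReal := by
          rw [Real.volume_Ioo, sub_zero, ENNReal.toReal_ofReal (hFd0 y)]
      _ ≤ _ := ENNReal.toReal_mono (hVfin bs y) (measure_mono hsub)
  -- ∫ (τ - F) over Ioc 0 b
  have hIF : ∀ b : ℝ, IntegrableOn F (Set.Ioc 0 b) := fun b =>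
    hbddInt F b hFm fun x => abs_le.2 ⟨by linarith [hF0 x], hFle1 x⟩
  have hIconst : ∀ b : ℝ, IntegrableOn (fun _ : ℝ => τ) (Set.Ioc 0 b) :=
    fun b => integrableOn_const (by rw [Real.volume_Ioc]; exact ENNReal.ofReal_ne_top)
  have hsub_int : ∀ b : ℝ, 0 ≤ b →
      (∫ x in Set.Ioc 0 b, (τ - F x)) = τ * b - ∫ x in Set.Ioc 0 b, F x := by
    intro b hb
    rw [integral_sub (hIconst b) (hIF b), setIntegral_const, measureReal_def, Real.volume_Ioc, sub_zero,
      ENNReal.toReal_ofReal hb, smul_eq_mul, mul_comm]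
  have hIfd : IntegrableOn Fdag (Set.Ioc 0 τ) := by
    have hmono : MonotoneOn Fdag (Set.uIcc 0 τ) := by
      rw [Set.uIcc_of_le hτ0.le]
      intro u hu v hv huv
      exact hFdmono u v (hv.2.trans hτ1) huv
    exact (hmono.intervalIntegrable (μ := volume)).1
  -- the key inequality
  have hC1 : ∀ b ∈ Set.Icc (0:ℝ) 1,
      τ * b - (∫ x in Set.Ioc 0 b, F x) ≤ ∫ y in Set.Ioc 0 τ, Fdag y := by
    intro b hb
    rw [← hsub_int b hb.1]
    have hstep1 : (∫ x in Set.Ioc 0 b, (τ - F x)) ≤ ∫ x in Set.Ioc 0 b, max (τ - F x) 0 := by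
      refine setIntegral_mono_on ((hIconst b).sub (hIF b)) ?_ measurableSet_Ioc
        fun x _ => le_max_left _ _
      refine hbddInt _ b ((measurable_const.sub hFm).max measurable_const) fun x => ?_
      rw [abs_le]
      constructor
      · linarith [le_max_right (τ - F x) (0:ℝ)]
      · exact max_le (by linarith [hF0 x]) zero_le_one
    have hVmono : Monotone fun y => (volume (Set.Ioc 0 b ∩ {x | F x < y})).toReal := by
      intro y y' hyy
      exact ENNReal.toReal_mono (hVfin b y')
        (measure_mono (Set.inter_subset_inter_right _ fun x hx => lt_of_lt_of_le hx hyy))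
    have hVint : IntegrableOn (fun y => (volume (Set.Ioc 0 b ∩ {x | F x < y})).toReal)
        (Set.Ioc 0 τ) := by
      refine hbddInt _ τ hVmono.measurable fun y => ?_
      rw [abs_of_nonneg ENNReal.toReal_nonneg]
      calc (volume (Set.Ioc 0 b ∩ {x | F x < y})).toReal
          ≤ (volume (Set.Icc (0:ℝ) 1)).toReal := by
            refine ENNReal.toReal_mono (by rw [Real.volume_Icc]; exact ENNReal.ofReal_ne_top)
              (measure_mono fun x hx => ⟨hx.1.1.le, hx.1.2.trans hb.2⟩)
        _ ≤ 1 := by rw [Real.volume_Icc, sub_zero, ENNReal.toReal_ofReal zero_le_one]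
    have hstep2 : (∫ x in Set.Ioc 0 b, max (τ - F x) 0) ≤ ∫ y in Set.Ioc 0 τ, Fdag y := by
      rw [hfub b]
      exact setIntegral_mono_on hVint hIfd measurableSet_Ioc (hVle b hb.2)
    exact hstep1.trans hstep2
  -- equality at the maximizer
  have hC2 : τ * bs - (∫ x in Set.Ioc 0 bs, F x) = ∫ y in Set.Ioc 0 τ, Fdag y := by
    rw [← hsub_int bs hbsIcc.1]
    have h1 : (∫ x in Set.Ioc 0 bs, (τ - F x)) = ∫ x in Set.Ioc 0 bs, max (τ - F x) 0 := by
      rw [integral_Ioc_eq_integral_Ioo, integral_Ioc_eq_integral_Ioo]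
      refine setIntegral_congr_fun measurableSet_Ioo fun x hx => ?_
      have hFxτ : F x < τ := by
        by_contra h
        exact absurd (hB2 τ x ⟨hx.1.le, hx.2.le.trans hbsIcc.2⟩ (not_lt.1 h)) (not_le.2 hx.2)
      exact (max_eq_left (by linarith)).symm
    rw [h1, hfub bs]
    exact setIntegral_congr_fun measurableSet_Ioc hVeq
  -- assembly
  have hIτpos : (0:ℝ) ≤ ∫ y in Set.Ioc 0 τ, Fdag y :=
    setIntegral_nonneg measurableSet_Ioc fun y _ => hFd0 y
  rw [intervalIntegral.integral_of_le hτ0.le]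
  have hkey : ∀ b ∈ Set.Icc (0:ℝ) 1,
      b - τ⁻¹ * (∫ ω, max (b - X ω) 0 ∂μ) ≤ τ⁻¹ * ∫ y in Set.Ioc 0 τ, Fdag y := by
    intro b hb
    rw [hA b hb.1]
    calc b - τ⁻¹ * (∫ x in Set.Ioc 0 b, F x)
        = τ⁻¹ * (τ * b - ∫ x in Set.Ioc 0 b, F x) := by
          rw [mul_sub, ← mul_assoc, inv_mul_cancel₀ hτne, one_mul]
      _ ≤ _ := mul_le_mul_of_nonneg_left (hC1 b hb) (inv_nonneg.2 hτ0.le)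
  apply le_antisymm
  · exact Real.sSup_le (by rintro x ⟨b, hb, rfl⟩; exact hkey b hb)
      (mul_nonneg (inv_nonneg.2 hτ0.le) hIτpos)
  · apply le_csSup
    · exact ⟨τ⁻¹ * ∫ y in Set.Ioc 0 τ, Fdag y, by rintro x ⟨b, hb, rfl⟩; exact hkey b hb⟩
    · refine ⟨bs, hbsIcc, ?_⟩
      show bs - τ⁻¹ * (∫ ω, max (bs - X ω) 0 ∂μ) = τ⁻¹ * ∫ y in Set.Ioc 0 τ, Fdag y
      rw [hA bs hbsIcc.1, ← hC2, mul_sub, ← mul_assoc, inv_mul_cancel₀ hτne, one_mul]
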